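/- For every m ∈ ℕ₀, the Hammersley point set H_m in base φ with F^m points is a (0,m,2)-net in base φ: for every two-dimensional prime elementary (k_1,k_2)-interval I with ρ(k_1,k_2) ≤ m+2, the number of points of H_m lying in I equals F^(m−|I|). -/

import Mathlib

open Finset

/-- `F m` denotes `F^m := F_{m+2}`, the Fibonacci numbers with shifted index,
so `F^{-2} = 0`, `F^{-1} = 1`, `F^0 = 1`, `F^1 = 2`, … (and `F^m = 0` for `m < -2`). -/
def F (m : ℤ) : ℕ := Nat.fib (m + 2).toNat

lemma F_pos (m : ℤ) (h : -2 < m) : 0 < F m := Nat.fib_pos.mpr (by omega)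

/-- The set of indices of the `1` digits in the (unique) Zeckendorf representation
`n = ∑_{j ∈ zeckSet n} F^j` (no two consecutive indices), computed greedily. -/
def zeckSet : ℕ → Finset ℕ
  | 0 => ∅
  | (n + 1) =>
      insert (Nat.findGreatest (fun i => F i ≤ n + 1) (n + 1))
        (zeckSet (n + 1 - F (Nat.findGreatest (fun i => F i ≤ n + 1) (n + 1))))
decreasing_by exact Nat.sub_lt (Nat.succ_pos n) (F_pos _ (by omega))

/-- The golden ratio `φ = (1 + √5)/2`. -/
noncomputable def phi : ℝ := (1 + Real.sqrt 5) / 2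

/-- `|n|`, the zeroth Zeckendorf digit of `n`. -/
def zd0 (n : ℕ) : ℕ := if 0 ∈ zeckSet n then 1 else 0

/-- `n‾ = ∑_j d_j φ^j`, the `n`-th whole number in base `φ`. -/
noncomputable def zbar (n : ℕ) : ℝ := ∑ j ∈ zeckSet n, phi ^ j

/-- `n ⊙ φ^k = ∑_j d_j F^{j+k}`, the Zeckendorf digit shift. -/
def zshift (n : ℕ) (k : ℤ) : ℕ := ∑ j ∈ zeckSet n, F (j + k)

/-- The `n`-th term of the van der Corput sequence in base φ:
`g_n = ∑_j d_j φ^(−j−1)` where `n = ∑_j d_j F^j` is the Zeckendorf representation. -/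
noncomputable def vdc (n : ℕ) : ℝ := ∑ j ∈ zeckSet n, phi ^ (-(j : ℤ) - 1)

/-- The number of points of the planar point set `P` lying in
`[c₁‾/φ^{k₁}, (c₁+1)‾/φ^{k₁}) × [c₂‾/φ^{k₂}, (c₂+1)‾/φ^{k₂})`. -/
noncomputable def cnt2 (N : ℕ) (P : Fin N → ℝ × ℝ) (k₁ k₂ c₁ c₂ : ℕ) : ℕ :=
  Nat.card {i : Fin N //
    (P i).1 ∈ Set.Ico (zbar c₁ / phi ^ k₁) (zbar (c₁ + 1) / phi ^ k₁) ∧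
    (P i).2 ∈ Set.Ico (zbar c₂ / phi ^ k₂) (zbar (c₂ + 1) / phi ^ k₂)}

/-- A planar point set `P` of `F^m` points is *(k₁,k₂)-equidistributed in base φ* if
every prime elementary `(k₁,k₂)`-interval (each `a_j < F^{k_j}` with first Zeckendorf
digit `d_1` of `a_j` equal to `0`) contains exactly `F^(m−|I|)` of its points, where
`|I| = (k₁ + |a₁|) + (k₂ + |a₂|)`. -/
def Equidistributed2 (m k₁ k₂ : ℕ) (P : Fin (F m) → ℝ × ℝ) : Prop :=
  ∀ a₁ a₂ : ℕ, a₁ < F k₁ → a₂ < F k₂ → 1 ∉ zeckSet a₁ → 1 ∉ zeckSet a₂ →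
    cnt2 (F m) P k₁ k₂ a₁ a₂ =
      F ((m : ℤ) - ((k₁ : ℤ) + (zd0 a₁ : ℤ)) - ((k₂ : ℤ) + (zd0 a₂ : ℤ)))

/-- `ρ(k₁,k₂) = k₁ + k₂ + #{j : k_j > 0}`. -/
def rho2 (k₁ k₂ : ℕ) : ℕ :=
  k₁ + k₂ + (if 0 < k₁ then 1 else 0) + (if 0 < k₂ then 1 else 0)

/-- A planar point set of `F^m` points is a *(t,m,2)-net in base φ* if it is
`(k₁,k₂)`-equidistributed for all `(k₁,k₂)` with `ρ(k₁,k₂) ≤ m+2−t`. -/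
def IsNet2 (t m : ℕ) (P : Fin (F m) → ℝ × ℝ) : Prop :=
  ∀ k₁ k₂ : ℕ, rho2 k₁ k₂ + t ≤ m + 2 → Equidistributed2 m k₁ k₂ P

lemma F_ieq {a b : ℤ} (h : a = b) : F a = F b := by rw [h]

lemma F_add_two {m : ℤ} (h : -2 ≤ m) : F (m + 2) = F (m + 1) + F m := by
  rcases h.lt_or_eq with h' | h'
  · unfold F
    have e1 : (m + 2 + 2).toNat = (m + 2).toNat + 2 := by omega
    have e2 : (m + 1 + 2).toNat = (m + 2).toNat + 1 := by omega
    rw [e1, e2, Nat.fib_add_two, Nat.add_comm]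
  · rw [← h']; rfl

lemma F_mono {a b : ℤ} (h : a ≤ b) : F a ≤ F b :=
  Nat.fib_mono (by omega)

lemma F_strict {a b : ℤ} (ha : 0 ≤ a) (h : a < b) : F a < F b := by
  unfold F
  have e1 : (a + 2).toNat = a.toNat + 2 := by omega
  have e2 : (b + 2).toNat = b.toNat + 2 := by omega
  rw [e1, e2]
  exact Nat.fib_add_two_strictMono (by omega)

lemma F_nat_add_one (t : ℕ) : F ((t : ℤ) + 1) = F t + F ((t : ℤ) - 1) := by
  have h := F_add_two (m := (t : ℤ) - 1) (by omega)
  have e1 : (t:ℤ) - 1 + 2 = (t:ℤ) + 1 := by ring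
  have e2 : (t:ℤ) - 1 + 1 = (t:ℤ) := by ring
  rw [e1, e2] at h
  exact h

lemma self_lt_F (n : ℕ) : n < F (n : ℤ) := by
  induction n with
  | zero => simp [F]
  | succ k ih =>
      have h := F_nat_add_one k
      have hp : 0 < F ((k:ℤ) - 1) := F_pos _ (by omega)
      have e : ((k+1:ℕ) : ℤ) = (k:ℤ) + 1 := by push_cast; ring
      rw [e, h]
      omega

lemma lt_F_succ (n : ℕ) : n < F ((n : ℤ) + 1) :=
  lt_of_lt_of_le (self_lt_F n) (F_mono (by omega))

----------------------------------------------------------------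
-- Part 2 : Zeckendorf core

def Adm (S : Finset ℕ) : Prop := ∀ i ∈ S, i + 1 ∉ S

def zval (S : Finset ℕ) : ℕ := ∑ i ∈ S, F (i : ℤ)

lemma Adm.subset {S T : Finset ℕ} (hT : T ⊆ S) (h : Adm S) : Adm T :=
  fun i hi hi1 => h i (hT hi) (hT hi1)

lemma adm_empty : Adm (∅ : Finset ℕ) := fun i hi => by simp at hi

lemma zval_lt : ∀ (S : Finset ℕ), Adm S → ∀ k : ℕ, (∀ i ∈ S, i < k) → zval S < F k := by
  intro S
  induction S using Finset.strongInduction with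
  | _ S ih =>
    intro hadm k hk
    rcases S.eq_empty_or_nonempty with rfl | hne
    · simpa [zval] using F_pos k (by omega)
    · set t := S.max' hne with ht
      have htS : t ∈ S := S.max'_mem hne
      have hss : S.erase t ⊂ S := Finset.erase_ssubset htS
      have hlt : ∀ i ∈ S.erase t, i + 1 < t := by
        intro i hi
        have hit : i ∈ S := Finset.mem_of_mem_erase hi
        have h1 : i ≤ t := S.le_max' i hit
        have h2 : i ≠ t := Finset.ne_of_mem_erase hi
        have h3 : i + 1 ≠ t := fun h => hadm i hit (h ▸ htS)
        omega
      have hv : zval S = F (t:ℤ) + zval (S.erase t) := by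
        rw [zval, zval, ← Finset.add_sum_erase _ _ htS]
      have htk : t < k := hk t htS
      rcases Nat.eq_zero_or_pos t with ht0 | ht1
      · have he : S.erase t = ∅ := by
          rw [Finset.eq_empty_iff_forall_notMem]
          intro i hi; have := hlt i hi; omega
        rw [hv, he, ht0]
        have h4 : F ((1:ℕ):ℤ) ≤ F (k:ℤ) := F_mono (by omega)
        have h5 : F ((0:ℕ):ℤ) = 1 := rfl
        have h6 : F ((1:ℕ):ℤ) = 2 := rfl
        have h7 : zval (∅ : Finset ℕ) = 0 := by simp [zval]
        omega
      · have hrec : zval (S.erase t) < F ((t - 1 : ℕ) : ℤ) :=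
          ih _ hss (hadm.subset (Finset.erase_subset _ _)) (t-1) (by
            intro i hi; have := hlt i hi; omega)
        have hcast : ((t - 1 : ℕ) : ℤ) = (t:ℤ) - 1 := by omega
        rw [hcast] at hrec
        have hFt : F ((t:ℤ) + 1) = F t + F ((t:ℤ) - 1) := F_nat_add_one t
        have : F ((t:ℤ)+1) ≤ F (k:ℤ) := F_mono (by omega)
        omega

lemma zeckSet_zero : zeckSet 0 = ∅ := by rw [zeckSet]

lemma zeck_main (n : ℕ) : zval (zeckSet n) = n ∧ Adm (zeckSet n) ∧
    ∀ j ∈ zeckSet n, F (j:ℤ) ≤ n := by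
  induction n using Nat.strong_induction_on with
  | _ n ih =>
    rcases Nat.eq_zero_or_pos n with rfl | hpos
    · exact ⟨by simp [zeckSet_zero, zval], by simp [zeckSet_zero, adm_empty], by simp [zeckSet_zero]⟩
    · obtain ⟨n', rfl⟩ : ∃ n', n = n' + 1 := ⟨n - 1, by omega⟩
      set t := Nat.findGreatest (fun i => F i ≤ n' + 1) (n' + 1) with htdef
      have hunfold : zeckSet (n' + 1) = insert t (zeckSet (n' + 1 - F t)) := by
        rw [zeckSet]
      have hF0 : F ((0:ℕ):ℤ) ≤ n' + 1 := by
        have : F ((0:ℕ):ℤ) = 1 := rfl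
        omega
      have ht_le : F (t:ℤ) ≤ n' + 1 :=
        Nat.findGreatest_spec (P := fun i => F i ≤ n' + 1) (m := 0) (Nat.zero_le _) hF0
      have ht_ub : n' + 1 < F ((t:ℤ) + 1) := by
        rcases Nat.lt_or_ge t (n' + 1) with h | h
        · by_contra hcon
          push_neg at hcon
          have hgr := Nat.findGreatest_is_greatest (P := fun i => F i ≤ n' + 1)
            (k := t + 1) (n := n' + 1) (by omega) (by omega)
          have hcast : (((t+1 : ℕ)):ℤ) = (t:ℤ)+1 := by push_cast; ring
          exact hgr (by show F (((t+1 : ℕ)):ℤ) ≤ n' + 1; rw [hcast]; exact hcon)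
        · have h2 := self_lt_F (n'+1)
          calc n' + 1 < F (((n'+1:ℕ)):ℤ) := h2
            _ ≤ F ((t:ℤ)+1) := F_mono (by push_cast; omega)
      set r := n' + 1 - F t with hrdef
      have hFt_pos : 0 < F (t:ℤ) := F_pos _ (by omega)
      have hr_lt : r < n' + 1 := by omega
      obtain ⟨ihv, iha, ihb⟩ := ih r hr_lt
      have hr_small : r < F ((t:ℤ) - 1) := by
        have := F_nat_add_one t
        omega
      have hsub : ∀ j ∈ zeckSet r, (j:ℤ) + 1 < t := by
        intro j hj
        have h1 : F (j:ℤ) ≤ r := ihb j hj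
        have h2 : F (j:ℤ) < F ((t:ℤ) - 1) := by omega
        by_contra hcon
        push_neg at hcon
        have : F ((t:ℤ)-1) ≤ F (j:ℤ) := F_mono (by omega)
        omega
      have htnotin : t ∉ zeckSet r := by
        intro h; have := hsub t h; omega
      refine ⟨?_, ?_, ?_⟩
      · rw [hunfold, zval, Finset.sum_insert htnotin]
        have : (∑ i ∈ zeckSet r, F (i:ℤ)) = r := ihv
        omega
      · rw [hunfold]
        intro i hi hi1
        rcases Finset.mem_insert.mp hi with rfl | hi'
        · rcases Finset.mem_insert.mp hi1 with h | h
          · omega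
          · have := hsub _ h; omega
        · rcases Finset.mem_insert.mp hi1 with h | h
          · have := hsub _ hi'; omega
          · exact iha i hi' h
      · intro j hj
        rcases Finset.mem_insert.mp (hunfold ▸ hj) with rfl | hj'
        · exact ht_le
        · have := ihb j hj'; omega

lemma zval_zeckSet (n : ℕ) : zval (zeckSet n) = n := (zeck_main n).1
lemma adm_zeckSet (n : ℕ) : Adm (zeckSet n) := (zeck_main n).2.1
lemma F_le_of_mem {n j : ℕ} (h : j ∈ zeckSet n) : F (j:ℤ) ≤ n := (zeck_main n).2.2 j h

lemma zeckSet_subset_range {n k : ℕ} (h : n < F (k:ℤ)) : ∀ j ∈ zeckSet n, j < k := by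
  intro j hj
  have h1 := F_le_of_mem hj
  by_contra hcon
  push_neg at hcon
  have : F (k:ℤ) ≤ F (j:ℤ) := F_mono (by omega)
  omega

lemma lt_F_of_subset_range {n k : ℕ} (h : ∀ j ∈ zeckSet n, j < k) : n < F (k:ℤ) := by
  have := zval_lt (zeckSet n) (adm_zeckSet n) k h
  rwa [zval_zeckSet] at this

lemma zeckSet_zval : ∀ (n : ℕ) (S : Finset ℕ), Adm S → zval S = n → zeckSet n = S := by
  intro n
  induction n using Nat.strong_induction_on with
  | _ n ih =>
    intro S hadm hval
    rcases S.eq_empty_or_nonempty with rfl | hne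
    · have : n = 0 := by rw [← hval]; simp [zval]
      rw [this, zeckSet_zero]
    · set t := S.max' hne with ht
      have htS : t ∈ S := S.max'_mem hne
      have hlt : ∀ i ∈ S.erase t, i + 1 < t := by
        intro i hi
        have hit : i ∈ S := Finset.mem_of_mem_erase hi
        have h1 : i ≤ t := S.le_max' i hit
        have h2 : i ≠ t := Finset.ne_of_mem_erase hi
        have h3 : i + 1 ≠ t := fun h => hadm i hit (h ▸ htS)
        omega
      have hv : zval S = F (t:ℤ) + zval (S.erase t) := by
        rw [zval, zval, ← Finset.add_sum_erase _ _ htS]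
      have herase_lt : zval (S.erase t) < F ((t:ℤ) - 1) := by
        rcases Nat.eq_zero_or_pos t with ht0 | ht1
        · have he : S.erase t = ∅ := by
            rw [Finset.eq_empty_iff_forall_notMem]
            intro i hi; have := hlt i hi; omega
          rw [he, ht0]
          simpa [zval] using F_pos ((0:ℤ)-1) (by omega)
        · have hrec := zval_lt (S.erase t) (hadm.subset (Finset.erase_subset _ _)) (t-1)
            (by intro i hi; have := hlt i hi; omega)
          have hcast : ((t - 1 : ℕ) : ℤ) = (t:ℤ) - 1 := by omega
          rw [hcast] at hrec
          exact hrec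
      have h1 : F (t:ℤ) ≤ n := by
        rw [← hval, hv]; omega
      have h2 : n < F ((t:ℤ) + 1) := by
        rw [← hval, hv]
        have := F_nat_add_one t
        omega
      have hFt_pos : 0 < F (t:ℤ) := F_pos _ (by omega)
      obtain ⟨n', rfl⟩ : ∃ n', n = n' + 1 := ⟨n - 1, by omega⟩
      set t' := Nat.findGreatest (fun i => F i ≤ n' + 1) (n' + 1) with ht'def
      have hunfold : zeckSet (n' + 1) = insert t' (zeckSet (n' + 1 - F t')) := by
        rw [zeckSet]
      have htn : t ≤ n' + 1 := le_trans (le_of_lt (self_lt_F t)) h1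
      have ht'_ge : t ≤ t' := Nat.le_findGreatest htn h1
      have hF0 : F ((0:ℕ):ℤ) ≤ n' + 1 := by
        have : F ((0:ℕ):ℤ) = 1 := rfl
        omega
      have ht'_le : F (t':ℤ) ≤ n' + 1 :=
        Nat.findGreatest_spec (P := fun i => F i ≤ n' + 1) (m := 0) (Nat.zero_le _) hF0
      have ht'_eq : t' = t := by
        by_contra hcon
        have h3 : t < t' := by omega
        have : F ((t:ℤ)+1) ≤ F (t':ℤ) := F_mono (by omega)
        omega
      rw [hunfold, ht'_eq]
      have hrem : n' + 1 - F t = zval (S.erase t) := by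
        rw [← hval, hv]; omega
      have := ih (n' + 1 - F t) (by omega) (S.erase t)
        (hadm.subset (Finset.erase_subset _ _)) hrem.symm
      rw [this]
      exact Finset.insert_erase htS

lemma zeckSet_inj {a b : ℕ} (h : zeckSet a = zeckSet b) : a = b := by
  rw [← zval_zeckSet a, ← zval_zeckSet b, h]

lemma zeckSet_shift (n k : ℕ) :
    zeckSet (zshift n (k:ℤ)) = (zeckSet n).image (· + k) := by
  have hinj : Function.Injective (· + k : ℕ → ℕ) := fun a b h => by simpa using h
  have hadm : Adm ((zeckSet n).image (· + k)) := by
    intro i hi hi1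
    obtain ⟨j, hj, rfl⟩ := Finset.mem_image.mp hi
    obtain ⟨j', hj', hj'e⟩ := Finset.mem_image.mp hi1
    have : j' = j + 1 := by omega
    exact adm_zeckSet n j hj (this ▸ hj')
  have hval : zval ((zeckSet n).image (· + k)) = zshift n (k:ℤ) := by
    rw [zval, Finset.sum_image (fun a _ b _ h => hinj h), zshift]
    apply Finset.sum_congr rfl
    intro j hj
    apply F_ieq
    push_cast
    ring
  exact zeckSet_zval _ _ hadm hval

lemma zshift_zero (n : ℕ) : zshift n 0 = n := by
  conv_rhs => rw [← zval_zeckSet n]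
  rw [zshift, zval]
  exact Finset.sum_congr rfl (fun j hj => F_ieq (by ring))

lemma zshift_comp (n k k' : ℕ) : zshift (zshift n (k:ℤ)) (k':ℤ) = zshift n ((k:ℤ) + k') := by
  rw [zshift, zeckSet_shift, Finset.sum_image (fun a _ b _ h => by simpa using h), zshift]
  apply Finset.sum_congr rfl
  intro j hj
  apply F_ieq
  push_cast
  ring

----------------------------------------------------------------
-- Part 3 : golden ratio facts

lemma phi_eq_gold : phi = Real.goldenRatio := rfl

lemma phi_pos : 0 < phi := phi_eq_gold ▸ Real.goldenRatio_pos

lemma one_lt_phi : 1 < phi := phi_eq_gold ▸ Real.one_lt_goldenRatio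

lemma phi_ne_zero : phi ≠ 0 := ne_of_gt phi_pos

lemma phi_sq : phi ^ 2 = phi + 1 := phi_eq_gold ▸ Real.goldenRatio_sq

lemma phi_inv : phi⁻¹ = phi - 1 := by
  have h : phi * (phi - 1) = 1 := by
    have h2 := phi_sq
    have h3 : phi ^ 2 = phi * phi := pow_two phi
    nlinarith
  exact inv_eq_of_mul_eq_one_right h

lemma phi_zpow_pos (z : ℤ) : 0 < phi ^ z := zpow_pos phi_pos z

lemma phi_zpow_mono {z w : ℤ} (h : z ≤ w) : phi ^ z ≤ phi ^ w :=
  zpow_le_zpow_right₀ (le_of_lt one_lt_phi) h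

lemma phi_zpow_add_two (z : ℤ) : phi ^ (z + 2) = phi ^ (z + 1) + phi ^ z := by
  have h1 : phi ^ (z + 2) = phi ^ z * (phi * phi) := by
    rw [zpow_add₀ phi_ne_zero, zpow_two]
  have h2 : phi ^ (z + 1) = phi ^ z * phi := by
    rw [zpow_add₀ phi_ne_zero, zpow_one]
  have h3 : phi * phi = phi + 1 := by rw [← pow_two, phi_sq]
  rw [h1, h2, h3]
  ring

lemma tail_bound : ∀ (S : Finset ℕ), Adm S → ∀ t : ℕ, (∀ j ∈ S, t ≤ j) →
    (∑ j ∈ S, phi ^ (-(j:ℤ))) < phi ^ (1 - (t:ℤ)) := by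
  intro S
  induction S using Finset.strongInduction with
  | _ S ih =>
    intro hadm t hb
    rcases S.eq_empty_or_nonempty with rfl | hne
    · simpa using phi_zpow_pos (1 - (t:ℤ))
    · set u := S.min' hne with hu
      have huS : u ∈ S := S.min'_mem hne
      have hut : t ≤ u := hb u huS
      have hmin : ∀ i ∈ S.erase u, u + 2 ≤ i := by
        intro i hi
        have hit : i ∈ S := Finset.mem_of_mem_erase hi
        have h1 : u ≤ i := S.min'_le i hit
        have h2 : i ≠ u := Finset.ne_of_mem_erase hi
        have h3 : i ≠ u + 1 := fun h => hadm u huS (h ▸ hit)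
        omega
      have hrec := ih (S.erase u) (Finset.erase_ssubset huS)
        (hadm.subset (Finset.erase_subset _ _)) (u+2) hmin
      have hsum : (∑ j ∈ S, phi ^ (-(j:ℤ)))
          = phi ^ (-(u:ℤ)) + ∑ j ∈ S.erase u, phi ^ (-(j:ℤ)) :=
        (Finset.add_sum_erase _ _ huS).symm
      have hcast : (1 - ((u+2:ℕ):ℤ)) = -(u:ℤ) - 1 := by push_cast; ring
      rw [hsum]
      have hid : phi ^ (1 - (u:ℤ)) = phi ^ (-(u:ℤ)) + phi ^ (-(u:ℤ) - 1) := by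
        have := phi_zpow_add_two (-(u:ℤ) - 1)
        have e1 : -(u:ℤ) - 1 + 2 = 1 - (u:ℤ) := by ring
        have e2 : -(u:ℤ) - 1 + 1 = -(u:ℤ) := by ring
        rw [e1, e2] at this
        exact this
      have hle : phi ^ (1 - (u:ℤ)) ≤ phi ^ (1 - (t:ℤ)) := phi_zpow_mono (by omega)
      rw [hcast] at hrec
      linarith

----------------------------------------------------------------
-- carry lemma and successor structure

lemma zval_image (S : Finset ℕ) (t : ℕ) :
    zval (S.image (· + t)) = ∑ i ∈ S, F ((i:ℤ) + t) := by
  rw [zval, Finset.sum_image (fun a _ b _ h => by simpa using h)]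
  exact Finset.sum_congr rfl (fun j hj => F_ieq (by push_cast; ring))

lemma carry : ∀ (S : Finset ℕ), Adm S → ∀ j : ℕ, (∀ i ∈ S, j + 1 ≤ i) →
    ∃ S' : Finset ℕ, Adm S' ∧ (∀ i ∈ S', j ≤ i) ∧
      (∀ t : ℕ, zval (S'.image (· + t)) = F ((j:ℤ) + t) + zval (S.image (· + t))) ∧
      ((∑ i ∈ S', phi ^ i) = phi ^ j + ∑ i ∈ S, phi ^ i) := by
  intro S
  induction S using Finset.strongInduction with
  | _ S ih =>
    intro hadm j hb
    by_cases hj1 : j + 1 ∈ S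
    · set T := S.erase (j+1) with hT
      have hTb : ∀ i ∈ T, (j+2) + 1 ≤ i := by
        intro i hi
        have hit : i ∈ S := Finset.mem_of_mem_erase hi
        have h1 : j + 1 ≤ i := hb i hit
        have h2 : i ≠ j + 1 := Finset.ne_of_mem_erase hi
        have h3 : i ≠ j + 2 := fun h => hadm (j+1) hj1 (h ▸ hit)
        omega
      obtain ⟨S', h1, h2, h3, h4⟩ := ih T (Finset.erase_ssubset hj1)
        (hadm.subset (Finset.erase_subset _ _)) (j+2) hTb
      refine ⟨S', h1, fun i hi => by have := h2 i hi; omega, ?_, ?_⟩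
      · intro t
        have hS : zval (S.image (· + t)) = F (((j+1:ℕ):ℤ) + t) + zval (T.image (· + t)) := by
          have : S = insert (j+1) T := (Finset.insert_erase hj1).symm
          rw [this, Finset.image_insert, zval, Finset.sum_insert (by
            intro hmem
            obtain ⟨x, hx, hxe⟩ := Finset.mem_image.mp hmem
            have := hTb x hx
            omega), ← zval]
          congr 1
          all_goals first
            | exact F_ieq (by push_cast; ring)
            | (push_cast; ring)
        rw [h3 t, hS]
        have hFe : F (((j+2:ℕ):ℤ) + t) = F (((j+1:ℕ):ℤ) + t) + F ((j:ℤ) + t) := by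
          have := F_add_two (m := (j:ℤ) + t) (by omega)
          have e1 : (j:ℤ) + t + 2 = ((j+2:ℕ):ℤ) + t := by push_cast; ring
          have e2 : (j:ℤ) + t + 1 = ((j+1:ℕ):ℤ) + t := by push_cast; ring
          rw [e1, e2] at this
          exact this
        rw [hFe]
        ring
      · have hS : (∑ i ∈ S, phi ^ i) = phi ^ (j+1) + ∑ i ∈ T, phi ^ i := by
          have : S = insert (j+1) T := (Finset.insert_erase hj1).symm
          rw [this, Finset.sum_insert (Finset.notMem_erase _ _)]
        rw [h4, hS]
        have : phi ^ (j+2) = phi ^ (j+1) + phi ^ j := by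
          rw [pow_add, phi_sq]
          ring
        rw [this]
        ring
    · refine ⟨insert j S, ?_, ?_, ?_, ?_⟩
      · intro i hi hi1
        rcases Finset.mem_insert.mp hi with rfl | hi'
        · rcases Finset.mem_insert.mp hi1 with h | h
          · omega
          · exact hj1 h
        · rcases Finset.mem_insert.mp hi1 with h | h
          · have := hb i hi'; omega
          · exact hadm i hi' h
      · intro i hi
        rcases Finset.mem_insert.mp hi with rfl | hi'
        · omega
        · have := hb i hi'; omega
      · intro t
        rw [Finset.image_insert, zval, Finset.sum_insert (by
          intro hmem
          obtain ⟨x, hx, hxe⟩ := Finset.mem_image.mp hmem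
          have := hb x hx
          omega), ← zval]
        congr 1
        all_goals first
          | exact F_ieq (by push_cast; ring)
          | (push_cast; ring)
      · rw [Finset.sum_insert (fun h => by have := hb j h; omega)]

lemma zval_image_zero (S : Finset ℕ) : zval (S.image (· + 0)) = zval S := by
  rw [zval_image, zval]
  exact Finset.sum_congr rfl (fun j _ => F_ieq (by push_cast; ring))

lemma zd0_le_one (n : ℕ) : zd0 n ≤ 1 := by unfold zd0; split <;> omega

lemma succ_struct (a : ℕ) :
    (∀ t : ℕ, zshift (a+1) (t:ℤ) = zshift a (t:ℤ) + F ((t:ℤ) - zd0 a)) ∧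
    zbar (a+1) = zbar a + phi ^ (-(zd0 a : ℤ)) := by
  by_cases h0 : 0 ∈ zeckSet a
  · have hd : zd0 a = 1 := by simp [zd0, h0]
    set S := zeckSet a with hS
    set T := S.erase 0 with hT
    have hTadm : Adm T := (adm_zeckSet a).subset (Finset.erase_subset _ _)
    have hTb : ∀ i ∈ T, 1 + 1 ≤ i := by
      intro i hi
      have hit : i ∈ S := Finset.mem_of_mem_erase hi
      have h2 : i ≠ 0 := Finset.ne_of_mem_erase hi
      have h3 : i ≠ 1 := fun h => adm_zeckSet a 0 h0 (by rw [h] at hit; exact hit)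
      omega
    obtain ⟨S', hAdm, hge, hF, hphi⟩ := carry T hTadm 1 hTb
    have ha1 : 1 ≤ a := by
      have h5 := F_le_of_mem h0
      have h6 : F ((0:ℕ):ℤ) = 1 := rfl
      omega
    have hsplitv : ∀ t : ℕ, zval (S.image (· + t)) = F ((0:ℤ) + t) + zval (T.image (· + t)) := by
      intro t
      rw [zval_image, zval_image, ← Finset.add_sum_erase _ _ h0]
      congr 1
      all_goals first
        | exact F_ieq (by push_cast; ring)
        | (push_cast; ring)
    have hvS : zval S = a := zval_zeckSet a
    have hvS' : zval S' = a + 1 := by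
      have h1 := hF 0
      have h2 := hsplitv 0
      rw [zval_image_zero, zval_image_zero] at h1
      rw [zval_image_zero, zval_image_zero] at h2
      have e1 : F (((1:ℕ):ℤ) + ((0:ℕ):ℤ)) = 2 := by decide
      have e2 : F ((0:ℤ) + ((0:ℕ):ℤ)) = 1 := by decide
      omega
    have hzeck : zeckSet (a+1) = S' := zeckSet_zval _ _ hAdm hvS'
    constructor
    · intro t
      have h1 := hF t
      have h2 := hsplitv t
      have e4 : zshift (a+1) (t:ℤ) = zval (S'.image (· + t)) := by
        rw [zshift, hzeck]; exact (zval_image _ _).symm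
      have e5 : zshift a (t:ℤ) = zval (S.image (· + t)) := by
        rw [zshift]; exact (zval_image _ _).symm
      have e6 : F (((1:ℕ):ℤ) + (t:ℤ)) = F ((0:ℤ) + (t:ℤ)) + F ((t:ℤ) - ((1:ℕ):ℤ)) := by
        have h := F_nat_add_one t
        have l1 : F (((1:ℕ):ℤ) + (t:ℤ)) = F ((t:ℤ)+1) := F_ieq (by push_cast; ring)
        have l2 : F ((0:ℤ) + (t:ℤ)) = F (t:ℤ) := F_ieq (by ring)
        have l3 : F ((t:ℤ) - ((1:ℕ):ℤ)) = F ((t:ℤ) - 1) := F_ieq (by push_cast; ring)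
        omega
      rw [e4, e5, h1, h2, hd, e6]
      omega
    · have h1 : (∑ i ∈ S, phi ^ i) = phi ^ 0 + ∑ i ∈ T, phi ^ i :=
        (Finset.add_sum_erase _ _ h0).symm
      have h2 : zbar (a+1) = ∑ i ∈ S', phi ^ i := by rw [zbar, hzeck]
      have h3 : zbar a = ∑ i ∈ S, phi ^ i := rfl
      rw [h2, hphi, hd, h3, h1]
      have h4 : phi ^ (-((1:ℕ):ℤ)) = phi - 1 := by
        have c : -((1:ℕ):ℤ) = -1 := by norm_num
        rw [c, zpow_neg_one, phi_inv]
      rw [h4]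
      simp only [pow_zero, pow_one]
      ring
  · have hd : zd0 a = 0 := by simp [zd0, h0]
    set S := zeckSet a with hS
    have hb : ∀ i ∈ S, 0 + 1 ≤ i := by
      intro i hi
      have : i ≠ 0 := fun h => h0 (h ▸ hi)
      omega
    obtain ⟨S', hAdm, hge, hF, hphi⟩ := carry S (adm_zeckSet a) 0 hb
    have hvS' : zval S' = a + 1 := by
      have h1 := hF 0
      rw [zval_image_zero, zval_image_zero, zval_zeckSet] at h1
      have e2 : F (((0:ℕ):ℤ) + ((0:ℕ):ℤ)) = 1 := by decide
      omega
    have hzeck : zeckSet (a+1) = S' := zeckSet_zval _ _ hAdm hvS'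
    constructor
    · intro t
      have h1 := hF t
      have e4 : zshift (a+1) (t:ℤ) = zval (S'.image (· + t)) := by
        rw [zshift, hzeck]; exact (zval_image _ _).symm
      have e5 : zshift a (t:ℤ) = zval (S.image (· + t)) := by
        rw [zshift]; exact (zval_image _ _).symm
      have e6 : F (((0:ℕ):ℤ) + (t:ℤ)) = F ((t:ℤ) - ((zd0 a : ℕ):ℤ)) :=
        F_ieq (by rw [hd]; push_cast; ring)
      rw [e4, h1, e6, e5]
      omega
    · have h2 : zbar (a+1) = ∑ i ∈ S', phi ^ i := by rw [zbar, hzeck]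
      have h3 : zbar a = ∑ i ∈ S, phi ^ i := rfl
      rw [h2, hphi, h3, hd]
      simp only [Nat.cast_zero, neg_zero, zpow_zero, pow_zero]
      ring

lemma succ_zshift (a t : ℕ) : zshift (a+1) (t:ℤ) = zshift a (t:ℤ) + F ((t:ℤ) - zd0 a) :=
  (succ_struct a).1 t

lemma succ_zbar (a : ℕ) : zbar (a+1) = zbar a + phi ^ (-(zd0 a : ℤ)) :=
  (succ_struct a).2

lemma zbar_zero : zbar 0 = 0 := by simp [zbar, zeckSet_zero]

lemma zbar_strictMono : StrictMono zbar :=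
  strictMono_nat_of_lt_succ fun n => by
    rw [succ_zbar]
    have := phi_zpow_pos (-(zd0 n : ℤ))
    linarith

lemma zbar_nonneg (n : ℕ) : 0 ≤ zbar n := by
  rw [← zbar_zero]
  exact zbar_strictMono.monotone (Nat.zero_le n)

lemma zshift_strictMono (t : ℕ) : StrictMono (fun a => zshift a (t:ℤ)) :=
  strictMono_nat_of_lt_succ fun n => by
    have h := succ_zshift n t
    have hd := zd0_le_one n
    have : 0 < F ((t:ℤ) - zd0 n) := F_pos _ (by omega)
    show zshift n (t:ℤ) < zshift (n+1) (t:ℤ)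
    omega

lemma interval_unique {x : ℝ} {a c : ℕ} (h1 : zbar a ≤ x) (h2 : x < zbar (a+1))
    (h3 : zbar c ≤ x) (h4 : x < zbar (c+1)) : a = c := by
  by_contra hne
  rcases Nat.lt_or_ge a c with h | h
  · have : zbar (a+1) ≤ zbar c := zbar_strictMono.monotone (by omega)
    linarith
  · have hlt : c < a := by omega
    have : zbar (c+1) ≤ zbar a := zbar_strictMono.monotone (by omega)
    linarith

lemma zbar_shift (n k : ℕ) : zbar (zshift n (k:ℤ)) = phi ^ k * zbar n := by
  rw [zbar, zeckSet_shift, Finset.sum_image (fun a _ b _ h => by simpa using h), zbar,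
    Finset.mul_sum]
  exact Finset.sum_congr rfl (fun j _ => by rw [pow_add, mul_comm])

----------------------------------------------------------------
-- Part 4 : van der Corput characterization

/-- reversed prefix digit set -/
def Pref (n k : ℕ) : Finset ℕ := (range k).filter (fun i => k - 1 - i ∈ zeckSet n)

lemma pref_adm (n k : ℕ) : Adm (Pref n k) := by
  intro i hi hi1
  rw [Pref, Finset.mem_filter, Finset.mem_range] at hi hi1
  obtain ⟨hik, hiz⟩ := hi
  obtain ⟨hik1, hiz1⟩ := hi1
  have he : k - 1 - (i+1) + 1 = k - 1 - i := by omega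
  exact adm_zeckSet n _ hiz1 (he ▸ hiz)

lemma zd0_pref (n k : ℕ) (c : ℕ) (hc : zeckSet c = Pref n k) (hd : zd0 c = 1) :
    0 < k ∧ k - 1 ∈ zeckSet n := by
  have h0 : 0 ∈ zeckSet c := by
    unfold zd0 at hd
    by_contra h
    simp [h] at hd
  rw [hc, Pref, Finset.mem_filter, Finset.mem_range] at h0
  exact ⟨h0.1, by have := h0.2; simpa using this⟩

lemma vdc_split (n k : ℕ) :
    phi ^ k * vdc n = (∑ i ∈ Pref n k, phi ^ i)
      + ∑ j ∈ (zeckSet n).filter (fun j => k ≤ j), phi ^ ((k:ℤ) - 1 - j) := by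
  have h1 : phi ^ k * vdc n = ∑ j ∈ zeckSet n, phi ^ ((k:ℤ) - 1 - j) := by
    rw [vdc, Finset.mul_sum]
    refine Finset.sum_congr rfl (fun j _ => ?_)
    rw [← zpow_natCast phi k, ← zpow_add₀ phi_ne_zero]
    exact congrArg (phi ^ ·) (by ring)
  rw [h1, ← Finset.sum_filter_add_sum_filter_not (zeckSet n) (fun j => j < k)]
  congr 1
  · -- low part reindex
    apply Finset.sum_nbij' (i := fun j => k - 1 - j) (j := fun i => k - 1 - i)
    · intro j hj
      rw [Finset.mem_filter] at hj
      rw [Pref, Finset.mem_filter, Finset.mem_range]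
      have h2 : k - 1 - (k - 1 - j) = j := by omega
      exact ⟨by omega, by rw [h2]; exact hj.1⟩
    · intro i hi
      rw [Pref, Finset.mem_filter, Finset.mem_range] at hi
      rw [Finset.mem_filter]
      exact ⟨hi.2, by omega⟩
    · intro j hj
      rw [Finset.mem_filter] at hj
      omega
    · intro i hi
      rw [Pref, Finset.mem_filter, Finset.mem_range] at hi
      omega
    · intro j hj
      rw [Finset.mem_filter] at hj
      rw [← zpow_natCast phi (k - 1 - j)]
      exact congrArg (phi ^ ·) (by omega)
  · refine Finset.sum_congr (Finset.filter_congr (fun j _ => ?_)) (fun _ _ => rfl)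
    exact not_lt

lemma vdc_tail_bound (n k : ℕ) (c : ℕ) (hc : zeckSet c = Pref n k) :
    (∑ j ∈ (zeckSet n).filter (fun j => k ≤ j), phi ^ ((k:ℤ) - 1 - j))
      < phi ^ (-(zd0 c : ℤ)) := by
  set Fil := (zeckSet n).filter (fun j => k ≤ j) with hFil
  have hadm : Adm Fil := (adm_zeckSet n).subset (Finset.filter_subset _ _)
  have hbound : ∀ j ∈ Fil, k + zd0 c ≤ j := by
    intro j hj
    rw [hFil, Finset.mem_filter] at hj
    rcases Nat.eq_zero_or_pos (zd0 c) with h | h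
    · omega
    · have hd1 : zd0 c = 1 := by have := zd0_le_one c; omega
      obtain ⟨hk0, hkm⟩ := zd0_pref n k c hc hd1
      have : j ≠ k := by
        intro he
        have h2 : (k - 1) + 1 = k := by omega
        exact adm_zeckSet n _ hkm (by rw [h2, ← he] at *; exact hj.1)
      omega
  have key : (∑ j ∈ Fil, phi ^ ((k:ℤ) - 1 - j))
      = phi ^ ((k:ℤ) - 1) * ∑ j ∈ Fil, phi ^ (-(j:ℤ)) := by
    rw [Finset.mul_sum]
    refine Finset.sum_congr rfl (fun j _ => ?_)
    rw [← zpow_add₀ phi_ne_zero]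
    exact congrArg (phi ^ ·) (by ring)
  rw [key]
  have htb := tail_bound Fil hadm (k + zd0 c) hbound
  have hpos : (0:ℝ) < phi ^ ((k:ℤ) - 1) := phi_zpow_pos _
  have h2 : phi ^ ((k:ℤ) - 1) * (∑ j ∈ Fil, phi ^ (-(j:ℤ)))
      < phi ^ ((k:ℤ) - 1) * phi ^ (1 - ((k + zd0 c : ℕ) : ℤ)) :=
    (mul_lt_mul_iff_right₀ hpos).mpr htb
  calc phi ^ ((k:ℤ) - 1) * (∑ j ∈ Fil, phi ^ (-(j:ℤ)))
      < phi ^ ((k:ℤ) - 1) * phi ^ (1 - ((k + zd0 c : ℕ) : ℤ)) := h2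
    _ = phi ^ (-(zd0 c : ℤ)) := by
        rw [← zpow_add₀ phi_ne_zero]
        exact congrArg (phi ^ ·) (by push_cast; ring)

lemma vdc_tail_nonneg (n k : ℕ) :
    0 ≤ ∑ j ∈ (zeckSet n).filter (fun j => k ≤ j), phi ^ ((k:ℤ) - 1 - j) :=
  Finset.sum_nonneg (fun j _ => le_of_lt (phi_zpow_pos _))

lemma vdc_window (n k : ℕ) (c : ℕ) (hc : zeckSet c = Pref n k) :
    zbar c ≤ phi ^ k * vdc n ∧ phi ^ k * vdc n < zbar (c + 1) := by
  have hsplit := vdc_split n k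
  have hzb : zbar c = ∑ i ∈ Pref n k, phi ^ i := by rw [zbar, hc]
  have h1 := vdc_tail_nonneg n k
  have h2 := vdc_tail_bound n k c hc
  have h3 := succ_zbar c
  constructor
  · rw [hsplit, hzb]; linarith
  · rw [hsplit, hzb] at *; linarith

lemma vdc_mem_iff (n k a : ℕ) :
    vdc n ∈ Set.Ico (zbar a / phi ^ k) (zbar (a+1) / phi ^ k) ↔ zeckSet a = Pref n k := by
  have hppos : (0:ℝ) < phi ^ k := pow_pos phi_pos k
  set c := zval (Pref n k) with hcdef
  have hc : zeckSet c = Pref n k := zeckSet_zval _ _ (pref_adm n k) rfl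
  obtain ⟨hw1, hw2⟩ := vdc_window n k c hc
  rw [Set.mem_Ico]
  constructor
  · rintro ⟨hlo, hhi⟩
    have hlo' : zbar a ≤ phi ^ k * vdc n := by
      rw [div_le_iff₀ hppos] at hlo
      rw [mul_comm]
      exact hlo
    have hhi' : phi ^ k * vdc n < zbar (a+1) := by
      rw [lt_div_iff₀ hppos] at hhi
      rw [mul_comm]
      exact hhi
    have : a = c := interval_unique hlo' hhi' hw1 hw2
    rw [this, hc]
  · intro h
    have hac : a = c := by
      rw [← zval_zeckSet a, h, hcdef]
    constructor
    · rw [div_le_iff₀ hppos, hac]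
      calc zbar c ≤ phi ^ k * vdc n := hw1
        _ = vdc n * phi ^ k := mul_comm _ _
    · rw [lt_div_iff₀ hppos, hac]
      calc vdc n * phi ^ k = phi ^ k * vdc n := mul_comm _ _
        _ < zbar (c+1) := hw2

----------------------------------------------------------------
-- Part 5 : second coordinate characterization

lemma zshift_le_iff {a b t : ℕ} : zshift a (t:ℤ) ≤ zshift b (t:ℤ) ↔ a ≤ b :=
  (zshift_strictMono t).le_iff_le

lemma zshift_lt_iff {a b t : ℕ} : zshift a (t:ℤ) < zshift b (t:ℤ) ↔ a < b :=
  (zshift_strictMono t).lt_iff_lt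

lemma snd_mem_iff (n m k a : ℕ) :
    (zbar n / phi ^ m) ∈ Set.Ico (zbar a / phi ^ k) (zbar (a+1) / phi ^ k) ↔
      (zshift a (m:ℤ) ≤ zshift n (k:ℤ) ∧ zshift n (k:ℤ) < zshift (a+1) (m:ℤ)) := by
  have hpm : (0:ℝ) < phi ^ m := pow_pos phi_pos m
  have hpk : (0:ℝ) < phi ^ k := pow_pos phi_pos k
  rw [Set.mem_Ico]
  have h1 : (zbar a / phi ^ k ≤ zbar n / phi ^ m) ↔ phi ^ m * zbar a ≤ phi ^ k * zbar n := by
    rw [div_le_div_iff₀ hpk hpm]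
    constructor <;> intro h <;> linarith [h]
  have h2 : (zbar n / phi ^ m < zbar (a+1) / phi ^ k) ↔ phi ^ k * zbar n < phi ^ m * zbar (a+1) := by
    rw [div_lt_div_iff₀ hpm hpk]
    constructor <;> intro h <;> linarith [h]
  rw [h1, h2, ← zbar_shift, ← zbar_shift, ← zbar_shift]
  rw [← zbar_strictMono.le_iff_le, ← zbar_strictMono.lt_iff_lt]

lemma zeckSet_eq_zero_iff {a : ℕ} : zeckSet a = ∅ ↔ a = 0 := by
  constructor
  · intro h
    have := zval_zeckSet a
    rw [h] at this
    simpa [zval] using this.symm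
  · rintro rfl; exact zeckSet_zero

----------------------------------------------------------------
-- Part 6 : digit conditions

def Rset (a k : ℕ) : Finset ℕ := (range k).filter (fun i => k - 1 - i ∈ zeckSet a)

lemma pref_iff {n a k : ℕ} (ha : ∀ j ∈ zeckSet a, j < k) :
    zeckSet a = Pref n k ↔ (zeckSet n).filter (fun i => i < k) = Rset a k := by
  constructor
  · intro h
    ext j
    rw [Finset.mem_filter, Rset, Finset.mem_filter, Finset.mem_range]
    constructor
    · rintro ⟨hjz, hjk⟩
      refine ⟨hjk, ?_⟩
      have : k - 1 - j ∈ Pref n k := by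
        rw [Pref, Finset.mem_filter, Finset.mem_range]
        have he : k - 1 - (k - 1 - j) = j := by omega
        exact ⟨by omega, by rw [he]; exact hjz⟩
      rw [← h] at this
      exact this
    · rintro ⟨hjk, hjz⟩
      rw [h, Pref, Finset.mem_filter, Finset.mem_range] at hjz
      have he : k - 1 - (k - 1 - j) = j := by omega
      refine ⟨by rw [← he]; exact hjz.2, hjk⟩
  · intro h
    ext i
    rw [Pref, Finset.mem_filter, Finset.mem_range]
    constructor
    · intro hiz
      have hik : i < k := ha i hiz
      refine ⟨hik, ?_⟩
      have : k - 1 - i ∈ Rset a k := by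
        rw [Rset, Finset.mem_filter, Finset.mem_range]
        have he : k - 1 - (k - 1 - i) = i := by omega
        exact ⟨by omega, by rw [he]; exact hiz⟩
      rw [← h, Finset.mem_filter] at this
      exact this.1
    · rintro ⟨hik, hiz⟩
      have : k - 1 - i ∈ (zeckSet n).filter (fun i => i < k) := by
        rw [Finset.mem_filter]
        exact ⟨hiz, by omega⟩
      rw [h, Rset, Finset.mem_filter, Finset.mem_range] at this
      have he : k - 1 - (k - 1 - i) = i := by omega
      rw [he] at this
      exact this.2

lemma cond2_iff {n a₂ k₂ s m : ℕ} (hm : m = s + k₂) (ha : ∀ j ∈ zeckSet a₂, j < k₂) :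
    (zshift a₂ (m:ℤ) ≤ zshift n (k₂:ℤ) ∧ zshift n (k₂:ℤ) < zshift (a₂+1) (m:ℤ)) ↔
    (zeckSet n).filter (fun i => s ≤ i) = (zeckSet a₂).image (· + s) := by
  have hd2 := zd0_le_one a₂
  have hzd : zd0 a₂ = 1 → (0 ∈ zeckSet a₂ ∧ 1 ≤ m) := by
    intro h
    have h0 : 0 ∈ zeckSet a₂ := by
      unfold zd0 at h
      by_contra hcon
      simp [hcon] at h
    have := ha 0 h0
    exact ⟨h0, by omega⟩
  have hzd0 : zd0 a₂ = 0 → 0 ∉ zeckSet a₂ := by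
    intro h hcon
    simp [zd0, hcon] at h
  have hsucc := succ_zshift a₂ m
  constructor
  · rintro ⟨hlo, hhi⟩
    -- extract l
    set A := zshift a₂ (m:ℤ) with hA
    set l := zshift n (k₂:ℤ) - A with hl
    have hls : zshift n (k₂:ℤ) = A + l := by omega
    have hlF : l < F ((m:ℤ) - zd0 a₂) := by omega
    -- sets
    set B' := (zeckSet a₂).image (· + m) with hB'
    have hB'adm : Adm B' := by
      intro i hi hi1
      obtain ⟨x, hx, rfl⟩ := Finset.mem_image.mp hi
      obtain ⟨y, hy, hye⟩ := Finset.mem_image.mp hi1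
      have : y = x + 1 := by omega
      exact adm_zeckSet a₂ x hx (this ▸ hy)
    have hZl : ∀ j ∈ zeckSet l, (j:ℤ) < (m:ℤ) - zd0 a₂ := by
      intro j hj
      have h1 := F_le_of_mem hj
      by_contra hcon
      push_neg at hcon
      have := F_mono hcon
      omega
    have hdisj : Disjoint B' (zeckSet l) := by
      rw [Finset.disjoint_left]
      intro i hi hi2
      obtain ⟨x, hx, rfl⟩ := Finset.mem_image.mp hi
      have := hZl _ hi2
      have := hd2
      omega
    have hUadm : Adm (B' ∪ zeckSet l) := by
      intro i hi hi1
      rcases Finset.mem_union.mp hi with h | h <;> rcases Finset.mem_union.mp hi1 with h' | h'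
      · exact hB'adm i h h'
      · obtain ⟨x, hx, rfl⟩ := Finset.mem_image.mp h
        have := hZl _ h'
        omega
      · -- i ∈ zeckSet l, i+1 ∈ B'
        obtain ⟨x, hx, hxe⟩ := Finset.mem_image.mp h'
        have h2 := hZl _ h
        -- x + m = i + 1, i < m - zd0 a₂
        rcases Nat.eq_zero_or_pos x with rfl | hx1
        · -- i + 1 = m, so zd0 a₂ must be 1 (since 0 ∈ zeckSet a₂), then i < m - 1, contra
          have hz1 : zd0 a₂ = 1 := by
            rcases Nat.eq_zero_or_pos (zd0 a₂) with h0 | h0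
            · exact absurd hx (hzd0 h0)
            · omega
          rw [hz1] at h2
          omega
        · omega
      · exact (adm_zeckSet l) i h h'
    have hUval : zval (B' ∪ zeckSet l) = zshift n (k₂:ℤ) := by
      rw [zval, Finset.sum_union hdisj, ← zval, ← zval, zval_image, zval_zeckSet]
      have : (∑ i ∈ zeckSet a₂, F ((i:ℤ) + m)) = A := by
        rw [hA, zshift]
      omega
    have hU : (zeckSet n).image (· + k₂) = B' ∪ zeckSet l := by
      rw [← zeckSet_shift]
      rw [← zeckSet_zval _ _ hUadm hUval]
    ext i
    rw [Finset.mem_filter, Finset.mem_image]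
    constructor
    · rintro ⟨hiz, his⟩
      have : i + k₂ ∈ B' ∪ zeckSet l := by
        rw [← hU, Finset.mem_image]
        exact ⟨i, hiz, rfl⟩
      rcases Finset.mem_union.mp this with h | h
      · obtain ⟨x, hx, hxe⟩ := Finset.mem_image.mp h
        exact ⟨x, hx, by omega⟩
      · have := hZl _ h
        have := hd2
        omega
    · rintro ⟨x, hx, rfl⟩
      have : x + m ∈ B' ∪ zeckSet l := Finset.mem_union_left _ (Finset.mem_image.mpr ⟨x, hx, rfl⟩)
      rw [← hU, Finset.mem_image] at this
      obtain ⟨j, hj, hje⟩ := this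
      have : j = x + s := by omega
      exact ⟨by rw [← this]; exact hj, by omega⟩
  · intro h
    set M := (zeckSet n).filter (fun i => i < s) with hM
    have hsplit : zeckSet n = M ∪ (zeckSet n).filter (fun i => s ≤ i) := by
      ext i
      simp only [hM, Finset.mem_union, Finset.mem_filter]
      constructor
      · intro hi
        by_cases hc : i < s
        · exact Or.inl ⟨hi, hc⟩
        · exact Or.inr ⟨hi, by omega⟩
      · rintro (⟨hi, _⟩ | ⟨hi, _⟩) <;> exact hi
    have hdisj : Disjoint M ((zeckSet n).filter (fun i => s ≤ i)) := by
      rw [Finset.disjoint_left]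
      intro i hi hi2
      rw [hM, Finset.mem_filter] at hi
      rw [Finset.mem_filter] at hi2
      omega
    have hnval : zshift n (k₂:ℤ) = (∑ i ∈ M, F ((i:ℤ) + k₂)) + zshift a₂ (m:ℤ) := by
      rw [zshift]
      conv_lhs => rw [hsplit]
      rw [Finset.sum_union hdisj, h]
      congr 1
      rw [Finset.sum_image (fun x _ y _ hxy => by simpa using hxy), zshift]
      exact Finset.sum_congr rfl (fun x _ => F_ieq (by omega))
    have hMbound : ∀ i ∈ M, (i:ℤ) + k₂ < (m:ℤ) - zd0 a₂ := by
      intro i hi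
      rw [hM, Finset.mem_filter] at hi
      rcases Nat.eq_zero_or_pos (zd0 a₂) with h0 | h0
      · omega
      · have hz1 : zd0 a₂ = 1 := by omega
        obtain ⟨h0z, hm1⟩ := hzd hz1
        have hsZ : s ∈ zeckSet n := by
          have : s ∈ (zeckSet n).filter (fun i => s ≤ i) := by
            rw [h, Finset.mem_image]
            exact ⟨0, h0z, by omega⟩
          rw [Finset.mem_filter] at this
          exact this.1
        have : i + 1 ≠ s := by
          intro he
          exact adm_zeckSet n i hi.1 (he ▸ hsZ)
        omega
    have hMsum : (∑ i ∈ M, F ((i:ℤ) + k₂)) < F ((m:ℤ) - zd0 a₂) := by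
      have hMadm : Adm (M.image (· + k₂)) := by
        intro i hi hi1
        obtain ⟨x, hx, rfl⟩ := Finset.mem_image.mp hi
        obtain ⟨y, hy, hye⟩ := Finset.mem_image.mp hi1
        have hyx : y = x + 1 := by omega
        rw [hM, Finset.mem_filter] at hx hy
        exact adm_zeckSet n x hx.1 (by rw [← hyx]; exact hy.1)
      have heq : (∑ i ∈ M, F ((i:ℤ) + k₂)) = zval (M.image (· + k₂)) := by
        rw [zval_image]
      set w := m - zd0 a₂ with hw
      have hcast : ((w:ℕ):ℤ) = (m:ℤ) - zd0 a₂ := by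
        rcases Nat.eq_zero_or_pos (zd0 a₂) with h0 | h0
        · omega
        · have hz1 : zd0 a₂ = 1 := by omega
          obtain ⟨_, hm1⟩ := hzd hz1
          omega
      have := zval_lt (M.image (· + k₂)) hMadm w (by
        intro i hi
        obtain ⟨x, hx, rfl⟩ := Finset.mem_image.mp hi
        have := hMbound x hx
        omega)
      rw [← heq] at this
      rw [← hcast]
      exact this
    constructor
    · omega
    · omega

----------------------------------------------------------------
-- Part 7 : counting

lemma zd0_iff {a : ℕ} : 0 ∈ zeckSet a ↔ zd0 a = 1 := by
  unfold zd0
  split <;> simp_all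

lemma count_main (m k₁ k₂ s a₁ a₂ : ℕ)
    (hm : m = s + k₂)
    (hsk : k₁ ≤ s)
    (ha1 : ∀ j ∈ zeckSet a₁, j < k₁) (ha2 : ∀ j ∈ zeckSet a₂, j < k₂)
    (hp1 : (1:ℕ) ∉ zeckSet a₁) (hp2 : (1:ℕ) ∉ zeckSet a₂)
    (hE : (k₁:ℤ) + zd0 a₁ + zd0 a₂ ≤ (s:ℤ) + 1) :
    ((range (F (m:ℤ))).filter (fun n => (zeckSet n).filter (fun i => i < k₁) = Rset a₁ k₁ ∧
        (zeckSet n).filter (fun i => s ≤ i) = (zeckSet a₂).image (· + s))).card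
      = F ((s:ℤ) - (k₁:ℤ) - zd0 a₁ - zd0 a₂) := by
  have hd1 : zd0 a₁ ≤ 1 := zd0_le_one a₁
  have hd2 : zd0 a₂ ≤ 1 := zd0_le_one a₂
  have hm1 : (0 ∈ zeckSet a₁) ↔ zd0 a₁ = 1 := zd0_iff
  have hm2 : (0 ∈ zeckSet a₂) ↔ zd0 a₂ = 1 := zd0_iff
  set u := k₁ + zd0 a₁ with hu
  set e : ℤ := (s:ℤ) - (k₁:ℤ) - zd0 a₁ - zd0 a₂ with he
  set R := Rset a₁ k₁ with hRdef
  set B := (zeckSet a₂).image (· + s) with hBdef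
  -- facts about R
  have hRmem : ∀ i, i ∈ R ↔ (i < k₁ ∧ k₁ - 1 - i ∈ zeckSet a₁) := by
    intro i
    rw [hRdef, Rset, Finset.mem_filter, Finset.mem_range]
  have hRf : ∀ i ∈ R, i + 1 ≤ k₁ ∧ i + 2 ≠ k₁ ∧ (i + 1 = k₁ → zd0 a₁ = 1) := by
    intro i hi
    rw [hRmem] at hi
    obtain ⟨hik, hiz⟩ := hi
    refine ⟨by omega, ?_, ?_⟩
    · intro hcon
      have : k₁ - 1 - i = 1 := by omega
      exact hp1 (this ▸ hiz)
    · intro hcon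
      have : k₁ - 1 - i = 0 := by omega
      exact hm1.mp (this ▸ hiz)
  have hRadm : Adm R := pref_adm a₁ k₁
  have hRtop : zd0 a₁ = 1 → k₁ - 1 ∈ R := by
    intro h
    have h0 : 0 ∈ zeckSet a₁ := hm1.mpr h
    have hk1 : 0 < k₁ := ha1 0 h0
    rw [hRmem]
    constructor
    · omega
    · have : k₁ - 1 - (k₁ - 1) = 0 := by omega
      rw [this]; exact h0
  -- facts about B
  have hBf : ∀ i ∈ B, s ≤ i ∧ i < m ∧ (i = s → zd0 a₂ = 1) ∧ i ≠ s + 1 := by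
    intro i hi
    obtain ⟨x, hx, rfl⟩ := Finset.mem_image.mp hi
    have hxk := ha2 x hx
    refine ⟨by omega, by omega, ?_, ?_⟩
    · intro hcon
      have : x = 0 := by omega
      exact hm2.mp (this ▸ hx)
    · intro hcon
      have : x = 1 := by omega
      exact hp2 (this ▸ hx)
  have hBadm : Adm B := by
    intro i hi hi1
    obtain ⟨x, hx, rfl⟩ := Finset.mem_image.mp hi
    obtain ⟨y, hy, hye⟩ := Finset.mem_image.mp hi1
    have : y = x + 1 := by omega
    exact adm_zeckSet a₂ x hx (this ▸ hy)
  have hBbot : zd0 a₂ = 1 → s ∈ B := by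
    intro h
    exact Finset.mem_image.mpr ⟨0, hm2.mpr h, by omega⟩
  -- the normal form of elements of the filter set
  have key : ∀ n, (n ∈ (range (F (m:ℤ))).filter (fun n => (zeckSet n).filter (fun i => i < k₁) = R ∧
        (zeckSet n).filter (fun i => s ≤ i) = B)) ↔
      (n < F (m:ℤ) ∧ (zeckSet n).filter (fun i => i < k₁) = R ∧
        (zeckSet n).filter (fun i => s ≤ i) = B) := by
    intro n
    rw [Finset.mem_filter, Finset.mem_range]
  -- middle sets
  set mid : ℕ → Finset ℕ := fun n => (zeckSet n).filter (fun i => u ≤ i ∧ i < s) with hmid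
  set bwd : ℕ → ℕ := fun n => zval ((mid n).image (· - u)) with hbwd
  set fwd : ℕ → ℕ := fun c => zval (R ∪ (zeckSet c).image (· + u) ∪ B) with hfwd
  -- facts used in both directions
  have hMID : ∀ n, n < F (m:ℤ) →
      (zeckSet n).filter (fun i => s ≤ i) = B →
      (∀ i ∈ mid n, u ≤ i ∧ (i:ℤ) < (s:ℤ) - zd0 a₂) := by
    intro n hnF hC2 i hi
    rw [hmid, Finset.mem_filter] at hi
    obtain ⟨hiz, hiu, his⟩ := hi
    refine ⟨hiu, ?_⟩
    rcases Nat.eq_zero_or_pos (zd0 a₂) with h0 | h0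
    · omega
    · have hz1 : zd0 a₂ = 1 := by omega
      have hsB : s ∈ B := hBbot hz1
      have hsZ : s ∈ zeckSet n := by
        have : s ∈ (zeckSet n).filter (fun i => s ≤ i) := by rw [hC2]; exact hsB
        rw [Finset.mem_filter] at this
        exact this.1
      have : i + 1 ≠ s := fun hcon => adm_zeckSet n i hiz (hcon ▸ hsZ)
      omega
  have hMIDadm : ∀ n, Adm ((mid n).image (· - u)) := by
    intro n
    intro i hi hi1
    obtain ⟨x, hx, rfl⟩ := Finset.mem_image.mp hi
    obtain ⟨y, hy, hye⟩ := Finset.mem_image.mp hi1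
    rw [hmid, Finset.mem_filter] at hx hy
    have : y = x + 1 := by omega
    exact adm_zeckSet n x hx.1 (this ▸ hy.1)
  have hBWD : ∀ n, n < F (m:ℤ) →
      (zeckSet n).filter (fun i => s ≤ i) = B →
      (zeckSet (bwd n) = (mid n).image (· - u) ∧ bwd n < F e) := by
    intro n hnF hC2
    have hz : zeckSet (bwd n) = (mid n).image (· - u) := zeckSet_zval _ _ (hMIDadm n) rfl
    refine ⟨hz, ?_⟩
    set w : ℕ := ((s:ℤ) - zd0 a₂ - u).toNat with hw
    have hlt : zval ((mid n).image (· - u)) < F ((w:ℕ):ℤ) := by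
      apply zval_lt _ (hMIDadm n)
      intro i hi
      obtain ⟨x, hx, rfl⟩ := Finset.mem_image.mp hi
      have := hMID n hnF hC2 x hx
      omega
    have hFw : F ((w:ℕ):ℤ) = F e := by
      rcases le_or_gt 0 e with h | h
      · exact F_ieq (by omega)
      · have he1 : e = -1 := by omega
        have hw0 : w = 0 := by omega
        rw [he1, hw0]
        rfl
    show zval ((mid n).image (· - u)) < F e
    omega
  have hMc : ∀ c, c < F e → (∀ i ∈ (zeckSet c).image (· + u), u ≤ i ∧ (i:ℤ) < (s:ℤ) - zd0 a₂) := by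
    intro c hc i hi
    obtain ⟨x, hx, rfl⟩ := Finset.mem_image.mp hi
    have h1 := F_le_of_mem hx
    have h2 : (x:ℤ) < e := by
      rcases le_or_gt 0 e with hce | hce
      · by_contra hcon
        push_neg at hcon
        have hmon : F e ≤ F (x:ℤ) := F_mono hcon
        omega
      · exfalso
        have he1 : e = -1 := by omega
        have hFe : F e = 1 := by rw [he1]; rfl
        have hx1 : 0 < F (x:ℤ) := F_pos (x:ℤ) (by omega)
        omega
    omega
  have hMcadm : ∀ c, Adm ((zeckSet c).image (· + u)) := by
    intro c i hi hi1
    obtain ⟨x, hx, rfl⟩ := Finset.mem_image.mp hi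
    obtain ⟨y, hy, hye⟩ := Finset.mem_image.mp hi1
    have : y = x + 1 := by omega
    exact adm_zeckSet c x hx (this ▸ hy)
  have hUadm : ∀ (M : Finset ℕ), Adm M → (∀ i ∈ M, u ≤ i ∧ (i:ℤ) < (s:ℤ) - zd0 a₂) →
      Adm (R ∪ M ∪ B) := by
    intro M hMadm hMf i hi hi1
    rw [Finset.mem_union, Finset.mem_union] at hi hi1
    rcases hi with (hi | hi) | hi <;> rcases hi1 with (hi1 | hi1) | hi1
    · exact hRadm i hi hi1
    · have f1 := hRf i hi
      have f2 := hMf (i+1) hi1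
      omega
    · have f1 := hRf i hi
      have f2 := hBf (i+1) hi1
      omega
    · have f1 := hMf i hi
      have f2 := hRf (i+1) hi1
      omega
    · exact hMadm i hi hi1
    · have f1 := hMf i hi
      have f2 := hBf (i+1) hi1
      omega
    · have f1 := hBf i hi
      have f2 := hRf (i+1) hi1
      omega
    · have f1 := hBf i hi
      have f2 := hMf (i+1) hi1
      omega
    · exact hBadm i hi hi1
  have hUfacts : ∀ (M : Finset ℕ), Adm M → (∀ i ∈ M, u ≤ i ∧ (i:ℤ) < (s:ℤ) - zd0 a₂) →
      (zeckSet (zval (R ∪ M ∪ B)) = R ∪ M ∪ B ∧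
       zval (R ∪ M ∪ B) < F (m:ℤ) ∧
       (zeckSet (zval (R ∪ M ∪ B))).filter (fun i => i < k₁) = R ∧
       (zeckSet (zval (R ∪ M ∪ B))).filter (fun i => s ≤ i) = B ∧
       (zeckSet (zval (R ∪ M ∪ B))).filter (fun i => u ≤ i ∧ i < s) = M) := by
    intro M hMadm hMf
    have hUz : zeckSet (zval (R ∪ M ∪ B)) = R ∪ M ∪ B :=
      zeckSet_zval _ _ (hUadm M hMadm hMf) rfl
    refine ⟨hUz, ?_, ?_, ?_, ?_⟩
    · apply lt_F_of_subset_range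
      rw [hUz]
      intro j hj
      rw [Finset.mem_union, Finset.mem_union] at hj
      rcases hj with (hj | hj) | hj
      · have := hRf j hj; omega
      · have := hMf j hj; omega
      · have := hBf j hj; omega
    · rw [hUz]
      ext i
      rw [Finset.mem_filter, Finset.mem_union, Finset.mem_union]
      constructor
      · rintro ⟨(hi | hi) | hi, hik⟩
        · exact hi
        · have := hMf i hi; omega
        · have := hBf i hi; omega
      · intro hi
        have := hRf i hi
        exact ⟨Or.inl (Or.inl hi), by omega⟩
    · rw [hUz]
      ext i
      rw [Finset.mem_filter, Finset.mem_union, Finset.mem_union]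
      constructor
      · rintro ⟨(hi | hi) | hi, his⟩
        · have := hRf i hi; omega
        · have := hMf i hi; omega
        · exact hi
      · intro hi
        have := hBf i hi
        exact ⟨Or.inr hi, by omega⟩
    · rw [hUz]
      ext i
      rw [Finset.mem_filter, Finset.mem_union, Finset.mem_union]
      constructor
      · rintro ⟨(hi | hi) | hi, hiu, his⟩
        · have := hRf i hi; omega
        · exact hi
        · have := hBf i hi; omega
      · intro hi
        have := hMf i hi
        exact ⟨Or.inl (Or.inr hi), by omega⟩
  have hsplitn : ∀ n, n < F (m:ℤ) →
      (zeckSet n).filter (fun i => i < k₁) = R →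
      (zeckSet n).filter (fun i => s ≤ i) = B →
      zeckSet n = R ∪ mid n ∪ B := by
    intro n hnF hC1 hC2
    ext i
    rw [Finset.mem_union, Finset.mem_union]
    constructor
    · intro hi
      by_cases hik : i < k₁
      · refine Or.inl (Or.inl ?_)
        rw [← hC1, Finset.mem_filter]
        exact ⟨hi, hik⟩
      · by_cases his : s ≤ i
        · refine Or.inr ?_
          rw [← hC2, Finset.mem_filter]
          exact ⟨hi, his⟩
        · refine Or.inl (Or.inr ?_)
          rw [hmid, Finset.mem_filter]
          refine ⟨hi, ?_, by omega⟩
          rcases Nat.eq_zero_or_pos (zd0 a₁) with h0 | h0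
          · omega
          · have hz1 : zd0 a₁ = 1 := by omega
            have hk1R : k₁ - 1 ∈ R := hRtop hz1
            have hk1 : 0 < k₁ := by
              have h0z : 0 ∈ zeckSet a₁ := hm1.mpr hz1
              exact ha1 0 h0z
            have hk1Z : k₁ - 1 ∈ zeckSet n := by
              have : k₁ - 1 ∈ (zeckSet n).filter (fun i => i < k₁) := by
                rw [hC1]; exact hk1R
              rw [Finset.mem_filter] at this
              exact this.1
            have hne : i ≠ k₁ := by
              intro hcon
              apply adm_zeckSet n (k₁ - 1) hk1Z
              have : k₁ - 1 + 1 = i := by omega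
              rw [this]
              exact hi
            omega
    · rintro ((hi | hi) | hi)
      · rw [← hC1, Finset.mem_filter] at hi
        exact hi.1
      · rw [hmid, Finset.mem_filter] at hi
        exact hi.1
      · rw [← hC2, Finset.mem_filter] at hi
        exact hi.1
  have himg : ∀ n, ((mid n).image (· - u)).image (· + u) = mid n := by
    intro n
    rw [Finset.image_image]
    ext i
    rw [Finset.mem_image]
    constructor
    · rintro ⟨x, hx, hxe⟩
      simp only [Function.comp_apply] at hxe
      have hxu : u ≤ x := by
        rw [hmid, Finset.mem_filter] at hx
        omega
      have : x = i := by omega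
      rw [← this]
      exact hx
    · intro hi
      refine ⟨i, hi, ?_⟩
      simp only [Function.comp_apply]
      have hxu : u ≤ i := by
        rw [hmid, Finset.mem_filter] at hi
        omega
      omega
  -- bijection
  rw [← Finset.card_range (F e)]
  apply Finset.card_bij' (i := fun n _ => bwd n) (j := fun c _ => fwd c)
  · -- forward lands in range
    intro n hn
    rw [key] at hn
    rw [Finset.mem_range]
    exact (hBWD n hn.1 hn.2.2).2
  · -- backward lands in filter set
    intro c hc
    rw [Finset.mem_range] at hc
    rw [key]
    have hcz : zeckSet (fwd c) = R ∪ (zeckSet c).image (· + u) ∪ B :=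
      (hUfacts _ (hMcadm c) (hMc c hc)).1
    obtain ⟨_, hlt, hf1, hf2, _⟩ := hUfacts _ (hMcadm c) (hMc c hc)
    exact ⟨hlt, hf1, hf2⟩
  · -- left inverse
    intro n hn
    rw [key] at hn
    obtain ⟨hnF, hC1, hC2⟩ := hn
    obtain ⟨hbz, hblt⟩ := hBWD n hnF hC2
    show fwd (bwd n) = n
    rw [hfwd]
    simp only []
    rw [hbz, himg n]
    have := hsplitn n hnF hC1 hC2
    rw [← this, zval_zeckSet]
  · -- right inverse
    intro c hc
    rw [Finset.mem_range] at hc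
    obtain ⟨hz, hlt, hf1, hf2, hf3⟩ := hUfacts _ (hMcadm c) (hMc c hc)
    show bwd (fwd c) = c
    rw [hbwd]
    simp only []
    have hmideq : mid (fwd c) = (zeckSet c).image (· + u) := hf3
    rw [hmideq, Finset.image_image]
    have : (zeckSet c).image ((· - u) ∘ (· + u)) = zeckSet c := by
      ext i
      rw [Finset.mem_image]
      constructor
      · rintro ⟨x, hx, hxe⟩
        simp only [Function.comp_apply] at hxe
        have : x = i := by omega
        rw [← this]
        exact hx
      · intro hi
        exact ⟨i, hi, by simp only [Function.comp_apply]; omega⟩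
    rw [this, zval_zeckSet]

lemma count_conflict (m k₁ k₂ s a₁ a₂ : ℕ)
    (hsk : s = k₁) (hz1 : zd0 a₁ = 1) (hz2 : zd0 a₂ = 1)
    (ha1 : ∀ j ∈ zeckSet a₁, j < k₁) :
    ((range (F (m:ℤ))).filter (fun n => (zeckSet n).filter (fun i => i < k₁) = Rset a₁ k₁ ∧
        (zeckSet n).filter (fun i => s ≤ i) = (zeckSet a₂).image (· + s))).card = 0 := by
  rw [Finset.card_eq_zero, Finset.eq_empty_iff_forall_notMem]
  intro n hn
  rw [Finset.mem_filter] at hn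
  obtain ⟨_, hC1, hC2⟩ := hn
  have h01 : 0 ∈ zeckSet a₁ := zd0_iff.mpr hz1
  have h02 : 0 ∈ zeckSet a₂ := zd0_iff.mpr hz2
  have hk1 : 0 < k₁ := ha1 0 h01
  have hQ1 : k₁ - 1 ∈ zeckSet n := by
    have : k₁ - 1 ∈ Rset a₁ k₁ := by
      rw [Rset, Finset.mem_filter, Finset.mem_range]
      have he : k₁ - 1 - (k₁ - 1) = 0 := by omega
      exact ⟨by omega, by rw [he]; exact h01⟩
    rw [← hC1, Finset.mem_filter] at this
    exact this.1
  have hQ2 : k₁ ∈ zeckSet n := by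
    have : s ∈ (zeckSet a₂).image (· + s) := Finset.mem_image.mpr ⟨0, h02, by omega⟩
    rw [← hC2, Finset.mem_filter] at this
    rw [← hsk]
    exact this.1
  apply adm_zeckSet n (k₁ - 1) hQ1
  have : k₁ - 1 + 1 = k₁ := by omega
  rw [this]
  exact hQ2

lemma count_low_ne (m k₁ k₂ s a₁ a₂ : ℕ)
    (hsk : s + 1 = k₁) (hz : zd0 a₁ ≠ zd0 a₂)
    (ha1 : ∀ j ∈ zeckSet a₁, j < k₁) :
    ((range (F (m:ℤ))).filter (fun n => (zeckSet n).filter (fun i => i < k₁) = Rset a₁ k₁ ∧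
        (zeckSet n).filter (fun i => s ≤ i) = (zeckSet a₂).image (· + s))).card = 0 := by
  rw [Finset.card_eq_zero, Finset.eq_empty_iff_forall_notMem]
  intro n hn
  rw [Finset.mem_filter] at hn
  obtain ⟨_, hC1, hC2⟩ := hn
  have hkey1 : k₁ - 1 ∈ zeckSet n ↔ 0 ∈ zeckSet a₁ := by
    constructor
    · intro h
      have : k₁ - 1 ∈ Rset a₁ k₁ := by
        rw [← hC1, Finset.mem_filter]
        exact ⟨h, by omega⟩
      rw [Rset, Finset.mem_filter, Finset.mem_range] at this
      have he : k₁ - 1 - (k₁ - 1) = 0 := by omega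
      rw [he] at this
      exact this.2
    · intro h
      have : k₁ - 1 ∈ Rset a₁ k₁ := by
        rw [Rset, Finset.mem_filter, Finset.mem_range]
        have he : k₁ - 1 - (k₁ - 1) = 0 := by omega
        exact ⟨by omega, by rw [he]; exact h⟩
      rw [← hC1, Finset.mem_filter] at this
      exact this.1
  have hkey2 : s ∈ zeckSet n ↔ 0 ∈ zeckSet a₂ := by
    constructor
    · intro h
      have : s ∈ (zeckSet a₂).image (· + s) := by
        rw [← hC2, Finset.mem_filter]
        exact ⟨h, le_refl s⟩
      obtain ⟨x, hx, hxe⟩ := Finset.mem_image.mp this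
      have : x = 0 := by omega
      rw [← this]
      exact hx
    · intro h
      have : s ∈ (zeckSet a₂).image (· + s) := Finset.mem_image.mpr ⟨0, h, by omega⟩
      rw [← hC2, Finset.mem_filter] at this
      exact this.1
  have he : k₁ - 1 = s := by omega
  rw [he] at hkey1
  have h1 := zd0_iff (a := a₁)
  have h2 := zd0_iff (a := a₂)
  have hd1 := zd0_le_one a₁
  have hd2 := zd0_le_one a₂
  by_cases hs : s ∈ zeckSet n
  · have := hkey1.mp hs
    have := hkey2.mp hs
    have : zd0 a₁ = 1 := h1.mp (hkey1.mp hs)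
    have : zd0 a₂ = 1 := h2.mp (hkey2.mp hs)
    omega
  · have e1 : zd0 a₁ = 0 := by
      rcases Nat.eq_zero_or_pos (zd0 a₁) with h | h
      · exact h
      · exact absurd (hkey1.mpr (h1.mpr (by omega))) hs
    have e2 : zd0 a₂ = 0 := by
      rcases Nat.eq_zero_or_pos (zd0 a₂) with h | h
      · exact h
      · exact absurd (hkey2.mpr (h2.mpr (by omega))) hs
    omega

lemma count_low_eq (m k₁ k₂ s a₁ a₂ : ℕ)
    (hm : m = s + k₂)
    (hsk : s + 1 = k₁) (hz1 : zd0 a₁ = 0) (hz2 : zd0 a₂ = 0)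
    (ha1 : ∀ j ∈ zeckSet a₁, j < k₁) (ha2 : ∀ j ∈ zeckSet a₂, j < k₂)
    (hp1 : (1:ℕ) ∉ zeckSet a₁) (hp2 : (1:ℕ) ∉ zeckSet a₂) :
    ((range (F (m:ℤ))).filter (fun n => (zeckSet n).filter (fun i => i < k₁) = Rset a₁ k₁ ∧
        (zeckSet n).filter (fun i => s ≤ i) = (zeckSet a₂).image (· + s))).card = 1 := by
  have h01 : 0 ∉ zeckSet a₁ := fun h => by simp [zd0_iff.mp h] at hz1
  have h02 : 0 ∉ zeckSet a₂ := fun h => by simp [zd0_iff.mp h] at hz2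
  set R := Rset a₁ k₁ with hRdef
  set B := (zeckSet a₂).image (· + s) with hBdef
  have hRf : ∀ i ∈ R, i + 3 ≤ k₁ := by
    intro i hi
    rw [hRdef, Rset, Finset.mem_filter, Finset.mem_range] at hi
    obtain ⟨hik, hiz⟩ := hi
    have hne1 : i + 1 ≠ k₁ := by
      intro hcon
      have : k₁ - 1 - i = 0 := by omega
      exact h01 (this ▸ hiz)
    have hne2 : i + 2 ≠ k₁ := by
      intro hcon
      have : k₁ - 1 - i = 1 := by omega
      exact hp1 (this ▸ hiz)
    omega
  have hBf : ∀ i ∈ B, s + 2 ≤ i ∧ i < m := by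
    intro i hi
    rw [hBdef] at hi
    obtain ⟨x, hx, rfl⟩ := Finset.mem_image.mp hi
    have hxk := ha2 x hx
    have hne0 : x ≠ 0 := fun h => h02 (h ▸ hx)
    have hne1 : x ≠ 1 := fun h => hp2 (h ▸ hx)
    omega
  have hRadm : Adm R := pref_adm a₁ k₁
  have hBadm : Adm B := by
    intro i hi hi1
    rw [hBdef] at hi hi1
    obtain ⟨x, hx, rfl⟩ := Finset.mem_image.mp hi
    obtain ⟨y, hy, hye⟩ := Finset.mem_image.mp hi1
    have : y = x + 1 := by omega
    exact adm_zeckSet a₂ x hx (this ▸ hy)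
  have hUadm : Adm (R ∪ B) := by
    intro i hi hi1
    rcases Finset.mem_union.mp hi with h | h <;> rcases Finset.mem_union.mp hi1 with h' | h'
    · exact hRadm i h h'
    · have := hRf i h; have := hBf (i+1) h'; omega
    · have := hBf i h; have := hRf (i+1) h'; omega
    · exact hBadm i h h'
  set n₀ := zval (R ∪ B) with hn₀
  have hUz : zeckSet n₀ = R ∪ B := zeckSet_zval _ _ hUadm rfl
  rw [Finset.card_eq_one]
  refine ⟨n₀, ?_⟩
  ext n
  rw [Finset.mem_filter, Finset.mem_range, Finset.mem_singleton]
  constructor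
  · rintro ⟨hnF, hC1, hC2⟩
    have hsplit : zeckSet n = R ∪ B := by
      ext i
      rw [Finset.mem_union]
      constructor
      · intro hi
        by_cases hik : i < k₁
        · by_cases his : i = s
          · exfalso
            -- s ∈ zeckSet n leads to 0 ∈ zeckSet a₂, contradiction
            have : s ∈ (zeckSet n).filter (fun i => s ≤ i) := by
              rw [Finset.mem_filter]
              exact ⟨his ▸ hi, le_refl s⟩
            rw [hC2] at this
            obtain ⟨x, hx, hxe⟩ := Finset.mem_image.mp this
            have : x = 0 := by omega
            exact h02 (this ▸ hx)
          · left
            rw [← hC1, Finset.mem_filter]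
            exact ⟨hi, hik⟩
        · right
          rw [← hC2, Finset.mem_filter]
          exact ⟨hi, by omega⟩
      · rintro (hi | hi)
        · have : i ∈ (zeckSet n).filter (fun i => i < k₁) := by
            rw [hC1]; exact hi
          rw [Finset.mem_filter] at this
          exact this.1
        · have : i ∈ (zeckSet n).filter (fun i => s ≤ i) := by
            rw [hC2]
            exact hi
          rw [Finset.mem_filter] at this
          exact this.1
    rw [← zval_zeckSet n, hsplit, hn₀]
  · rintro rfl
    refine ⟨?_, ?_, ?_⟩
    · apply lt_F_of_subset_range
      rw [hUz]
      intro j hj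
      rcases Finset.mem_union.mp hj with h | h
      · have := hRf j h; omega
      · have := hBf j h; omega
    · rw [hUz]
      ext i
      rw [Finset.mem_filter, Finset.mem_union]
      constructor
      · rintro ⟨hi | hi, hik⟩
        · exact hi
        · have := hBf i hi; omega
      · intro hi
        have := hRf i hi
        exact ⟨Or.inl hi, by omega⟩
    · rw [hUz]
      ext i
      rw [Finset.mem_filter, Finset.mem_union]
      constructor
      · rintro ⟨hi | hi, his⟩
        · have := hRf i hi; omega
        · exact hi
      · intro hi
        have := hBf i hi
        exact ⟨Or.inr hi, by omega⟩

lemma count_high (m a₂ : ℕ) (ha2 : ∀ j ∈ zeckSet a₂, j < m + 1) :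
    ((range (F (m:ℤ))).filter (fun n =>
        zshift a₂ (m:ℤ) ≤ zshift n ((m+1:ℕ):ℤ) ∧
        zshift n ((m+1:ℕ):ℤ) < zshift (a₂+1) (m:ℤ))).card
      = if zd0 a₂ = 0 then 1 else 0 := by
  have hcomp : ∀ n : ℕ, zshift n ((m+1:ℕ):ℤ) = zshift (zshift n ((1:ℕ):ℤ)) (m:ℤ) := by
    intro n
    rw [zshift_comp]
    exact congrArg (zshift n) (by push_cast; ring)
  have hiff : ∀ n : ℕ, (zshift a₂ (m:ℤ) ≤ zshift n ((m+1:ℕ):ℤ) ∧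
      zshift n ((m+1:ℕ):ℤ) < zshift (a₂+1) (m:ℤ)) ↔ zshift n ((1:ℕ):ℤ) = a₂ := by
    intro n
    rw [hcomp n]
    rw [zshift_le_iff, zshift_lt_iff]
    omega
  split_ifs with hz
  · -- zd0 a₂ = 0 : exactly one point
    have h02 : 0 ∉ zeckSet a₂ := fun h => by simp [zd0_iff.mp h] at hz
    set D := (zeckSet a₂).image (· - 1) with hD
    have hge1 : ∀ x ∈ zeckSet a₂, 1 ≤ x := by
      intro x hx
      have : x ≠ 0 := fun h => h02 (h ▸ hx)
      omega
    have hDadm : Adm D := by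
      intro i hi hi1
      rw [hD] at hi hi1
      obtain ⟨x, hx, rfl⟩ := Finset.mem_image.mp hi
      obtain ⟨y, hy, hye⟩ := Finset.mem_image.mp hi1
      have hx1 := hge1 x hx
      have hy1 := hge1 y hy
      have : y = x + 1 := by omega
      exact adm_zeckSet a₂ x hx (this ▸ hy)
    set n₀ := zval D with hn₀
    have hDz : zeckSet n₀ = D := zeckSet_zval _ _ hDadm rfl
    have hXn₀ : zshift n₀ ((1:ℕ):ℤ) = a₂ := by
      rw [zshift, hDz, hD, Finset.sum_image (fun x hx y hy hxy => by
        have := hge1 x hx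
        have := hge1 y hy
        omega)]
      conv_rhs => rw [← zval_zeckSet a₂]
      rw [zval]
      refine Finset.sum_congr rfl (fun x hx => F_ieq ?_)
      have := hge1 x hx
      omega
    rw [Finset.card_eq_one]
    refine ⟨n₀, ?_⟩
    ext n
    rw [Finset.mem_filter, Finset.mem_range, Finset.mem_singleton, hiff n]
    constructor
    · rintro ⟨hnF, hX⟩
      have himg : (zeckSet n).image (· + 1) = zeckSet a₂ := by
        rw [← zeckSet_shift, hX]
      have : zeckSet n = D := by
        rw [hD, ← himg, Finset.image_image]
        ext i
        rw [Finset.mem_image]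
        constructor
        · intro hi
          exact ⟨i, hi, by simp only [Function.comp_apply]; omega⟩
        · rintro ⟨x, hx, hxe⟩
          simp only [Function.comp_apply] at hxe
          have : x = i := by omega
          rw [← this]
          exact hx
      rw [← zval_zeckSet n, this, hn₀]
    · rintro rfl
      refine ⟨?_, hXn₀⟩
      apply lt_F_of_subset_range
      rw [hDz, hD]
      intro j hj
      obtain ⟨x, hx, rfl⟩ := Finset.mem_image.mp hj
      have := ha2 x hx
      have := hge1 x hx
      omega
  · -- zd0 a₂ = 1 : no points
    have h02 : 0 ∈ zeckSet a₂ := by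
      have := zd0_le_one a₂
      exact zd0_iff.mpr (by omega)
    rw [Finset.card_eq_zero, Finset.eq_empty_iff_forall_notMem]
    intro n hn
    rw [Finset.mem_filter, hiff n] at hn
    obtain ⟨_, hX⟩ := hn
    have himg : (zeckSet n).image (· + 1) = zeckSet a₂ := by
      rw [← zeckSet_shift, hX]
    rw [← himg, Finset.mem_image] at h02
    obtain ⟨x, _, hxe⟩ := h02
    omega

lemma main_count (m k₁ k₂ a₁ a₂ : ℕ) (h1 : a₁ < F (k₁:ℤ)) (h2 : a₂ < F (k₂:ℤ))
    (hp1 : (1:ℕ) ∉ zeckSet a₁) (hp2 : (1:ℕ) ∉ zeckSet a₂)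
    (hrho : k₁ + k₂ + (if 0 < k₁ then 1 else 0) + (if 0 < k₂ then 1 else 0) ≤ m + 2) :
    ((range (F (m:ℤ))).filter (fun n => zeckSet a₁ = Pref n k₁ ∧
        (zshift a₂ (m:ℤ) ≤ zshift n (k₂:ℤ) ∧ zshift n (k₂:ℤ) < zshift (a₂+1) (m:ℤ)))).card
      = F ((m : ℤ) - ((k₁:ℤ) + (zd0 a₁:ℤ)) - ((k₂:ℤ) + (zd0 a₂:ℤ))) := by
  classical
  have ha1 : ∀ j ∈ zeckSet a₁, j < k₁ := fun j hj => zeckSet_subset_range h1 j hj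
  have ha2 : ∀ j ∈ zeckSet a₂, j < k₂ := fun j hj => zeckSet_subset_range h2 j hj
  have hd1 := zd0_le_one a₁
  have hd2 := zd0_le_one a₂
  have hι1 : zd0 a₁ = 0 ∨ (zd0 a₁ = 1 ∧ 0 < k₁) := by
    rcases Nat.eq_zero_or_pos (zd0 a₁) with h | h
    · exact Or.inl h
    · have hz : zd0 a₁ = 1 := by omega
      exact Or.inr ⟨hz, ha1 0 (zd0_iff.mpr hz)⟩
  have hι2 : zd0 a₂ = 0 ∨ (zd0 a₂ = 1 ∧ 0 < k₂) := by
    rcases Nat.eq_zero_or_pos (zd0 a₂) with h | h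
    · exact Or.inl h
    · have hz : zd0 a₂ = 1 := by omega
      exact Or.inr ⟨hz, ha2 0 (zd0_iff.mpr hz)⟩
  have hr1 : k₁ + k₂ ≤ m + 2 := by split_ifs at hrho <;> omega
  have hr2 : 0 < k₁ → k₁ + k₂ ≤ m + 1 := by intro h; split_ifs at hrho <;> omega
  have hr3 : 0 < k₂ → k₁ + k₂ ≤ m + 1 := by intro h; split_ifs at hrho <;> omega
  have hr4 : 0 < k₁ → 0 < k₂ → k₁ + k₂ ≤ m := by intro h h'; split_ifs at hrho <;> omega
  rcases le_or_gt k₂ m with hk2m | hk2m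
  · set s := m - k₂ with hs
    have hm : m = s + k₂ := by omega
    have hpred : ∀ n ∈ range (F (m:ℤ)), ((zeckSet a₁ = Pref n k₁ ∧
        (zshift a₂ (m:ℤ) ≤ zshift n (k₂:ℤ) ∧ zshift n (k₂:ℤ) < zshift (a₂+1) (m:ℤ))) ↔
        ((zeckSet n).filter (fun i => i < k₁) = Rset a₁ k₁ ∧
         (zeckSet n).filter (fun i => s ≤ i) = (zeckSet a₂).image (· + s))) := by
      intro n _
      exact and_congr (pref_iff ha1) (cond2_iff hm ha2)
    rw [Finset.filter_congr hpred]
    rcases le_or_gt k₁ s with hks | hks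
    · rcases le_or_gt ((k₁:ℤ) + zd0 a₁ + zd0 a₂) ((s:ℤ)+1) with hE | hE
      · rw [count_main m k₁ k₂ s a₁ a₂ hm hks ha1 ha2 hp1 hp2 hE]
        exact F_ieq (by omega)
      · have hc1 : zd0 a₁ = 1 := by omega
        have hc2 : zd0 a₂ = 1 := by omega
        have hsk : s = k₁ := by omega
        rw [count_conflict m k₁ k₂ s a₁ a₂ hsk hc1 hc2 ha1]
        have he2 : (m:ℤ) - ((k₁:ℤ) + (zd0 a₁:ℤ)) - ((k₂:ℤ) + (zd0 a₂:ℤ)) = -2 := by omega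
        rw [he2]
        rfl
    · have hcase : s + 1 = k₁ := by omega
      by_cases hzz : zd0 a₁ = zd0 a₂
      · have hb0 : zd0 a₁ = 0 ∧ zd0 a₂ = 0 := by omega
        rw [count_low_eq m k₁ k₂ s a₁ a₂ hm hcase hb0.1 hb0.2 ha1 ha2 hp1 hp2]
        have he1 : (m:ℤ) - ((k₁:ℤ) + (zd0 a₁:ℤ)) - ((k₂:ℤ) + (zd0 a₂:ℤ)) = -1 := by omega
        rw [he1]
        rfl
      · rw [count_low_ne m k₁ k₂ s a₁ a₂ hcase hzz ha1]
        have he2 : (m:ℤ) - ((k₁:ℤ) + (zd0 a₁:ℤ)) - ((k₂:ℤ) + (zd0 a₂:ℤ)) = -2 := by omega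
        rw [he2]
        rfl
  · have hk21 : k₂ = m + 1 ∧ k₁ = 0 := by
      have := hr3 (by omega)
      omega
    have ha10 : a₁ = 0 := by
      have hF0 : F ((0:ℕ):ℤ) = 1 := rfl
      rw [hk21.2] at h1
      omega
    have hd10 : zd0 a₁ = 0 := by
      rw [ha10]
      simp [zd0, zeckSet_zero]
    have hpref0 : ∀ n : ℕ, zeckSet a₁ = Pref n k₁ := by
      intro n
      rw [ha10, hk21.2, zeckSet_zero, Pref]
      simp
    have hpred : ∀ n ∈ range (F (m:ℤ)), ((zeckSet a₁ = Pref n k₁ ∧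
        (zshift a₂ (m:ℤ) ≤ zshift n (k₂:ℤ) ∧ zshift n (k₂:ℤ) < zshift (a₂+1) (m:ℤ))) ↔
        (zshift a₂ (m:ℤ) ≤ zshift n ((m+1:ℕ):ℤ) ∧
         zshift n ((m+1:ℕ):ℤ) < zshift (a₂+1) (m:ℤ))) := by
      intro n _
      rw [hk21.1]
      constructor
      · rintro ⟨_, h⟩; exact h
      · intro h; exact ⟨hpref0 n, h⟩
    rw [Finset.filter_congr hpred]
    rw [count_high m a₂ (by rw [← hk21.1]; exact ha2)]
    split_ifs with h
    · have he1 : (m:ℤ) - ((k₁:ℤ) + (zd0 a₁:ℤ)) - ((k₂:ℤ) + (zd0 a₂:ℤ)) = -1 := by omega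
      rw [he1]
      rfl
    · have hz1 : zd0 a₂ = 1 := by omega
      have he2 : (m:ℤ) - ((k₁:ℤ) + (zd0 a₁:ℤ)) - ((k₂:ℤ) + (zd0 a₂:ℤ)) = -2 := by omega
      rw [he2]
      rfl


/-- The Hammersley point set `H_m = {(g_n, n‾/φ^m) : 0 ≤ n < F^m}` in
base φ is a `(0,m,2)`-net in base φ. -/
theorem statement12 (m : ℕ) :
    IsNet2 0 m (fun n : Fin (F m) => (vdc (n : ℕ), zbar (n : ℕ) / phi ^ m)) := by
  intro k₁ k₂ hrho a₁ a₂ h1 h2 hp1 hp2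
  classical
  have hrho' : k₁ + k₂ + (if 0 < k₁ then 1 else 0) + (if 0 < k₂ then 1 else 0) ≤ m + 2 := by
    rw [rho2] at hrho
    omega
  set Q : ℕ → Prop := fun n => zeckSet a₁ = Pref n k₁ ∧
      (zshift a₂ (m:ℤ) ≤ zshift n (k₂:ℤ) ∧ zshift n (k₂:ℤ) < zshift (a₂+1) (m:ℤ)) with hQ
  have hiff : ∀ n : ℕ, ((vdc n ∈ Set.Ico (zbar a₁ / phi ^ k₁) (zbar (a₁+1) / phi ^ k₁)) ∧
      (zbar n / phi ^ m ∈ Set.Ico (zbar a₂ / phi ^ k₂) (zbar (a₂+1) / phi ^ k₂))) ↔ Q n :=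
    fun n => and_congr (vdc_mem_iff n k₁ a₁) (snd_mem_iff n m k₂ a₂)
  have hcard : cnt2 (F m) (fun n : Fin (F m) => (vdc (n:ℕ), zbar (n:ℕ) / phi ^ m)) k₁ k₂ a₁ a₂
      = ((range (F (m:ℤ))).filter Q).card := by
    rw [cnt2, Nat.card_eq_fintype_card, Fintype.card_subtype]
    apply Finset.card_bij (i := fun (x : Fin (F (m:ℤ))) _ => (x : ℕ))
    · intro x hx
      rw [Finset.mem_filter] at hx
      rw [Finset.mem_filter, Finset.mem_range]
      refine ⟨x.isLt, ?_⟩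
      rw [← hiff (x : ℕ)]
      exact hx.2
    · intro x _ y _ hxy
      exact Fin.ext hxy
    · intro n hn
      rw [Finset.mem_filter, Finset.mem_range] at hn
      refine ⟨⟨n, hn.1⟩, ?_, rfl⟩
      rw [Finset.mem_filter]
      refine ⟨Finset.mem_univ _, ?_⟩
      show (vdc n ∈ _) ∧ (zbar n / phi ^ m ∈ _)
      rw [hiff n]
      exact hn.2
  rw [hcard]
  exact main_count m k₁ k₂ a₁ a₂ h1 h2 hp1 hp2 hrho'
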